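/- For every L > 0 and every ε > 0 there exists a constant M > 0 such that for every twice continuously differentiable function w on [0,L] with w(0) = 0 one has ∫₀^L w(x)² dx ≤ ε·[ ∫₀^L w''(x)² dx + ( ∫₀^L w'(x)² dx )² ] + M. -/

import Mathlib

open MeasureTheory intervalIntegral

/-- Lower-order estimate: for every `L > 0` and `ε > 0` there is `M > 0` such that
every `C²` function `w` with `w 0 = 0` satisfies
`∫₀^L w² ≤ ε·(∫₀^L (w'')² + (∫₀^L (w')²)²) + M`. -/
theorem lower_order_estimate (L : ℝ) (hL : 0 < L) (ε : ℝ) (hε : 0 < ε) :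
    ∃ M : ℝ, 0 < M ∧
      ∀ w : ℝ → ℝ, ContDiff ℝ 2 w → w 0 = 0 →
        (∫ x in (0:ℝ)..L, (w x) ^ 2)
          ≤ ε * ((∫ x in (0:ℝ)..L, (deriv (deriv w) x) ^ 2)
              + (∫ x in (0:ℝ)..L, (deriv w x) ^ 2) ^ 2) + M := by
  refine ⟨L ^ 4 / (4 * ε) + 1, by positivity, ?_⟩
  intro w hw hw0
  set c : ℝ := Real.sqrt (L / (2 * ε)) with hc_def
  have hc : 0 < c := Real.sqrt_pos.2 (by positivity)
  have hc2 : c ^ 2 = L / (2 * ε) := Real.sq_sqrt (by positivity)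
  have hdw : Continuous (deriv w) := hw.continuous_deriv one_le_two
  have hwdiff : Differentiable ℝ w := hw.differentiable two_ne_zero
  have hwc : Continuous w := hwdiff.continuous
  set A : ℝ := ∫ x in (0:ℝ)..L, (deriv w x) ^ 2 with hA_def
  set B : ℝ := ∫ x in (0:ℝ)..L, (deriv (deriv w) x) ^ 2 with hB_def
  have hA : 0 ≤ A :=
    intervalIntegral.integral_nonneg hL.le (fun x _ => sq_nonneg _)
  have hB : 0 ≤ B :=
    intervalIntegral.integral_nonneg hL.le (fun x _ => sq_nonneg _)
  set I : ℝ := ∫ x in (0:ℝ)..L, |deriv w x| with hI_def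
  have hIint : ∀ a b : ℝ, IntervalIntegrable (fun x => |deriv w x|) volume a b :=
    fun a b => (hdw.abs.intervalIntegrable a b)
  have hI : 0 ≤ I :=
    intervalIntegral.integral_nonneg hL.le (fun x _ => abs_nonneg _)
  -- pointwise bound on |w x|
  have hwbd : ∀ x ∈ Set.Icc (0:ℝ) L, |w x| ≤ I := by
    intro x hx
    have hftc : ∫ t in (0:ℝ)..x, deriv w t = w x - w 0 :=
      intervalIntegral.integral_deriv_eq_sub (fun t _ => hwdiff t)
        (hdw.intervalIntegrable 0 x)
    have h1 : |w x| = |∫ t in (0:ℝ)..x, deriv w t| := by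
      rw [hftc, hw0, sub_zero]
    rw [h1]
    calc |∫ t in (0:ℝ)..x, deriv w t| ≤ ∫ t in (0:ℝ)..x, |deriv w t| :=
          intervalIntegral.abs_integral_le_integral_abs hx.1
      _ ≤ I :=
          intervalIntegral.integral_mono_interval le_rfl hx.1 hx.2
            (Filter.Eventually.of_forall fun t => abs_nonneg _) (hIint 0 L)
  -- ∫ w² ≤ L * I²
  have h2 : (∫ x in (0:ℝ)..L, (w x) ^ 2) ≤ L * I ^ 2 := by
    have : (∫ x in (0:ℝ)..L, (w x) ^ 2) ≤ ∫ _x in (0:ℝ)..L, I ^ 2 := by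
      apply intervalIntegral.integral_mono_on hL.le
        ((hwc.pow 2).intervalIntegrable 0 L) (intervalIntegrable_const)
      intro x hx
      have := hwbd x hx
      calc (w x) ^ 2 = |w x| ^ 2 := (sq_abs _).symm
        _ ≤ I ^ 2 := pow_le_pow_left₀ (abs_nonneg _) this 2
    simpa [sub_zero] using this
  -- I ≤ c*L/2 + A/(2*c)
  have h3 : I ≤ c * L / 2 + A / (2 * c) := by
    have hpt : ∀ x ∈ Set.Icc (0:ℝ) L,
        |deriv w x| ≤ c / 2 + (deriv w x) ^ 2 / (2 * c) := by
      intro x _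
      have h := sq_nonneg (|deriv w x| - c)
      have h2 : |deriv w x| ^ 2 = (deriv w x) ^ 2 := sq_abs _
      rw [div_add_div _ _ (by norm_num) (by positivity),
        le_div_iff₀ (by positivity : (0:ℝ) < 2 * (2 * c))]
      nlinarith [abs_nonneg (deriv w x)]
    have hmono : I ≤ ∫ x in (0:ℝ)..L, (c / 2 + (deriv w x) ^ 2 / (2 * c)) := by
      apply intervalIntegral.integral_mono_on hL.le (hIint 0 L)
      · exact (continuous_const.add ((hdw.pow 2).div_const _)).intervalIntegrable 0 L
      · exact hpt
    have heq : (∫ x in (0:ℝ)..L, (c / 2 + (deriv w x) ^ 2 / (2 * c)))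
        = c * L / 2 + A / (2 * c) := by
      rw [intervalIntegral.integral_add (g := fun x => (deriv w x) ^ 2 / (2 * c)) intervalIntegrable_const
        (((hdw.pow 2).div_const _).intervalIntegrable 0 L),
        intervalIntegral.integral_const, intervalIntegral.integral_div]
      simp [hA_def]
      ring
    linarith [hmono, heq ▸ hmono]
  -- conclude
  have hkey : L * I ^ 2 ≤ ε * A ^ 2 + L ^ 4 / (4 * ε) := by
    have hI2 : I ^ 2 ≤ (c * L / 2 + A / (2 * c)) ^ 2 := by
      apply pow_le_pow_left₀ hI h3 2
    have hsq : (c * L / 2 + A / (2 * c)) ^ 2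
        ≤ 2 * (c * L / 2) ^ 2 + 2 * (A / (2 * c)) ^ 2 := by
      nlinarith [sq_nonneg (c * L / 2 - A / (2 * c))]
    have hc2' : c ^ 2 * (2 * ε) = L := by
      rw [hc2]; field_simp
    have e1 : L * (2 * (c * L / 2) ^ 2) = L ^ 4 / (4 * ε) := by
      have : L * (2 * (c * L / 2) ^ 2) = (c ^ 2 * (2 * ε)) * L ^ 2 * L / (4 * ε) := by
        field_simp; ring
      rw [this, hc2']; ring
    have e2 : L * (2 * (A / (2 * c)) ^ 2) = ε * A ^ 2 := by
      have hcne : c ≠ 0 := hc.ne'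
      have : L * (2 * (A / (2 * c)) ^ 2) = L * A ^ 2 / (2 * c ^ 2) := by
        field_simp
      rw [this, hc2]
      field_simp
    calc L * I ^ 2 ≤ L * (2 * (c * L / 2) ^ 2 + 2 * (A / (2 * c)) ^ 2) := by
          nlinarith [hI2, hsq]
      _ = ε * A ^ 2 + L ^ 4 / (4 * ε) := by rw [mul_add, e1, e2]; ring
  have hεB : 0 ≤ ε * B := by positivity
  nlinarith [h2, hkey]
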